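/- Completeness of amendment (corrected Amendment Lemma): if the program (D,C) is well-formed and (D,C,s) --[tl]-->** (D,C',s'), then there exist transition label lists tl', tl'', a choreography C'' and state s'' such that sel_exp (tl ++ tl') tl'', (D,C',s') --[tl']-->** (D,C'',s''), and (amend_D D ps, amend D ps C, s) --[tl'']-->** (amend_D D ps, amend D ps C'', s''). -/
import Mathlib


namespace CC

abbrev Pid := ℕ
abbrev Var := ℕ
abbrev Val := ℕ
abbrev RecVar := ℕ

inductive Label | left | right
deriving Repr

inductive Expr | zero | var (x : Var) | succ (x : Var)
deriving Repr

inductive BExpr | eq (x y : Var)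
deriving Repr

/-- Behaviours of the process calculus SP. -/
inductive Behaviour
| send (p : Pid) (e : Expr) (B : Behaviour)
| recv (p : Pid) (x : Var) (B : Behaviour)
| sel (p : Pid) (l : Label) (B : Behaviour)
| branch (p : Pid) (mL mR : Option Behaviour)
| cond (b : BExpr) (B1 B2 : Behaviour)
| call (X : RecVar)
| nil
deriving Repr

mutual
/-- The merge relation on behaviours. -/
inductive Merge : Behaviour → Behaviour → Behaviour → Prop
| nil : Merge .nil .nil .nil
| call (X) : Merge (.call X) (.call X) (.call X)
| send {B1 B2 B p e} : Merge B1 B2 B → Merge (.send p e B1) (.send p e B2) (.send p e B)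
| recv {B1 B2 B p x} : Merge B1 B2 B → Merge (.recv p x B1) (.recv p x B2) (.recv p x B)
| sel {B1 B2 B p l} : Merge B1 B2 B → Merge (.sel p l B1) (.sel p l B2) (.sel p l B)
| cond {b Bt1 Bt2 Bt Be1 Be2 Be} : Merge Bt1 Bt2 Bt → Merge Be1 Be2 Be →
    Merge (.cond b Bt1 Be1) (.cond b Bt2 Be2) (.cond b Bt Be)
| branch {p mL1 mL2 mL mR1 mR2 mR} : MergeO mL1 mL2 mL → MergeO mR1 mR2 mR →
    Merge (.branch p mL1 mR1) (.branch p mL2 mR2) (.branch p mL mR)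

/-- Componentwise merge on optional behaviours. -/
inductive MergeO : Option Behaviour → Option Behaviour → Option Behaviour → Prop
| none : MergeO none none none
| someNone (B) : MergeO (some B) none (some B)
| noneSome (B) : MergeO none (some B) (some B)
| someSome {B1 B2 B} : Merge B1 B2 B → MergeO (some B1) (some B2) (some B)
end

/-- Interactions. -/
inductive Eta
| com (p : Pid) (e : Expr) (q : Pid) (x : Var)
| sel (p q : Pid) (l : Label)
deriving Repr

/-- Choreographies of Core Choreographies. -/
inductive Chor
| seq (η : Eta) (C : Chor)
| cond (p : Pid) (b : BExpr) (C1 C2 : Chor)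
| call (X : RecVar)
| nil
deriving Repr

/-- Sets of procedure definitions. -/
abbrev DefSet := RecVar → List Pid × Chor

def procsEta : Eta → Finset Pid
| .com p _ q _ => {p, q}
| .sel p q _ => {p, q}

/-- The set of processes occurring in a choreography. -/
def procsC : Chor → Finset Pid
| .seq η C => procsEta η ∪ procsC C
| .cond p _ C1 C2 => insert p (procsC C1 ∪ procsC C2)
| .call _ => ∅
| .nil => ∅

def etaWF : Eta → Prop
| .com p _ q _ => p ≠ q
| .sel p q _ => p ≠ q

/-- Well-formed choreographies: no self-communications. -/
def Chor_WF : Chor → Prop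
| .seq η C => etaWF η ∧ Chor_WF C
| .cond _ _ C1 C2 => Chor_WF C1 ∧ Chor_WF C2
| .call _ => True
| .nil => True

/-- Well-formed choreographic programs. -/
def Program_WF (D : DefSet) (C : Chor) : Prop :=
  Chor_WF C ∧ ∀ X, Chor_WF (D X).2

/-- Behaviour projection. -/
inductive BProj (D : DefSet) : Chor → Pid → Behaviour → Prop
| send {p e q x C B} : BProj D C p B → BProj D (.seq (.com p e q x) C) p (.send q e B)
| recv {p e q x C B} : p ≠ q → BProj D C q B → BProj D (.seq (.com p e q x) C) q (.recv p x B)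
| com {p e q x C r B} : p ≠ r → q ≠ r → BProj D C r B → BProj D (.seq (.com p e q x) C) r B
| pick {p q l C B} : BProj D C p B → BProj D (.seq (.sel p q l) C) p (.sel q l B)
| left {p q C B} : p ≠ q → BProj D C q B →
    BProj D (.seq (.sel p q .left) C) q (.branch p (some B) none)
| right {p q C B} : p ≠ q → BProj D C q B →
    BProj D (.seq (.sel p q .right) C) q (.branch p none (some B))
| selSkip {p q l C r B} : p ≠ r → q ≠ r → BProj D C r B → BProj D (.seq (.sel p q l) C) r B
| condEval {p b C1 C2 B1 B2} : BProj D C1 p B1 → BProj D C2 p B2 →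
    BProj D (.cond p b C1 C2) p (.cond b B1 B2)
| condMerge {p b C1 C2 r B1 B2 B} : p ≠ r → BProj D C1 r B1 → BProj D C2 r B2 →
    Merge B1 B2 B → BProj D (.cond p b C1 C2) r B
| callIn {X r} : r ∈ (D X).1 → BProj D (.call X) r (.call X)
| callOut {X r} : r ∉ (D X).1 → BProj D (.call X) r .nil
| nil {r} : BProj D .nil r .nil

/-- Projectability of a choreography on a process. -/
def projectable_B (D : DefSet) (C : Chor) (p : Pid) : Prop := ∃ B, BProj D C p B

/-- Prepend a selection of label `l` from `p` to each process in `ps`. -/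
def add_sels (p : Pid) (l : Label) (ps : List Pid) (C : Chor) : Chor :=
  ps.foldr (fun r acc => .seq (.sel p r l) acc) C

open Classical in
/-- The processes of `ps` that need to be informed of the outcome of the conditional. -/
noncomputable def up_list (D : DefSet) (p : Pid) (b : BExpr) (ps : List Pid)
    (C1 C2 : Chor) : List Pid :=
  ps.filter fun r => decide (r ≠ p ∧ ¬ projectable_B D (.cond p b C1 C2) r)

/-- The amendment procedure. -/
noncomputable def amend (D : DefSet) (ps : List Pid) : Chor → Chor
| .seq η C => .seq η (amend D ps C)
| .cond p b C1 C2 =>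
    let A1 := amend D ps C1
    let A2 := amend D ps C2
    let l := up_list D p b ps A1 A2
    .cond p b (add_sels p .left l A1) (add_sels p .right l A2)
| .call X => .call X
| .nil => .nil

/-- Amendment of a set of procedure definitions. -/
noncomputable def amend_D (D : DefSet) (ps : List Pid) : DefSet :=
  fun X => ((D X).1, amend D ps (D X).2)

/-- Memory states. -/
abbrev State := Pid → Var → Val

def updState (s : State) (p : Pid) (x : Var) (v : Val) : State :=
  fun q y => if q = p ∧ y = x then v else s q y

def eval : Expr → State → Pid → Val
| .zero, _, _ => 0
| .var x, s, p => s p x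
| .succ x, s, p => s p x + 1

def beval : BExpr → State → Pid → Bool
| .eq x y, s, p => s p x == s p y

/-- Transition labels. -/
inductive TLabel
| com (p : Pid) (v : Val) (q : Pid)
| sel (p q : Pid) (l : Label)
| tau (p : Pid)
deriving Repr

def tlProcs : TLabel → Finset Pid
| .com p _ q => {p, q}
| .sel p q _ => {p, q}
| .tau p => {p}

/-- Labelled transition semantics of choreographic configurations. -/
inductive Step (D : DefSet) : Chor → State → TLabel → Chor → State → Prop
| com {p e q x C s} :
    Step D (.seq (.com p e q x) C) s (.com p (eval e s p) q) C (updState s q x (eval e s p))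
| sel {p q l C s} : Step D (.seq (.sel p q l) C) s (.sel p q l) C s
| thenB {p b C1 C2 s} : beval b s p = true → Step D (.cond p b C1 C2) s (.tau p) C1 s
| elseB {p b C1 C2 s} : beval b s p = false → Step D (.cond p b C1 C2) s (.tau p) C2 s
| call {X p s} : p ∈ (D X).1 → Step D (.call X) s (.tau p) (D X).2 s
| delayEta {η C s t C' s'} : Disjoint (procsEta η) (tlProcs t) →
    Step D C s t C' s' → Step D (.seq η C) s t (.seq η C') s'
| delayCond {p b C1 C2 s t C1' C2' s'} : p ∉ tlProcs t →
    Step D C1 s t C1' s' → Step D C2 s t C2' s' →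
    Step D (.cond p b C1 C2) s t (.cond p b C1' C2') s'

/-- Reflexive-transitive closure of the transition relation. -/
inductive StepMany (D : DefSet) : Chor → State → List TLabel → Chor → State → Prop
| refl {C s} : StepMany D C s [] C s
| step {C s t C' s' tl C'' s''} : Step D C s t C' s' → StepMany D C' s' tl C'' s'' →
    StepMany D C s (t :: tl) C'' s''

/-- Selection expansion of lists of transition labels. -/
inductive SelExp : List TLabel → List TLabel → Prop
| base {tl tl'} : tl.Perm tl' → SelExp tl tl'
| extra {p q l tl tl' tl''} : SelExp tl tl' → (TLabel.sel p q l :: tl').Perm tl'' →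
    SelExp tl tl''

/-- A configuration is stuck when it admits no transition. -/
def Stuck (D : DefSet) (C : Chor) (s : State) : Prop :=
  ∀ t C' s', ¬ Step D C s t C' s'

/-- Termination: there is no infinite execution from the configuration. -/
def Terminates (D : DefSet) (C : Chor) (s : State) : Prop :=
  ¬ ∃ f : ℕ → Chor × State × TLabel,
      (f 0).1 = C ∧ (f 0).2.1 = s ∧
      ∀ n, Step D (f n).1 (f n).2.1 (f n).2.2 (f (n+1)).1 (f (n+1)).2.1

/-- `(D, C)` implements the partial function `f` with input processes `ps`
(storing the inputs in variable `0`) and output process `q`. -/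
def implements (D : DefSet) (C : Chor) {m : ℕ} (f : (Fin m → ℕ) → Part ℕ)
    (ps : Fin m → Pid) (q : Pid) : Prop :=
  ∀ (s : State) (n : Fin m → ℕ), (∀ i, s (ps i) 0 = n i) →
    (∀ v ∈ f n, Terminates D C s ∧
      ∀ tl C' s', StepMany D C s tl C' s' → Stuck D C' s' → s' q 0 = v) ∧
    (¬ (f n).Dom → ¬ ∃ tl C' s', StepMany D C s tl C' s' ∧ Stuck D C' s')

/-- `ps` covers all processes used by the program `(D, C)`. -/
def CoversProcs (D : DefSet) (C : Chor) (ps : List Pid) : Prop :=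
  (∀ r ∈ procsC C, r ∈ ps) ∧ ∀ X, ∀ r ∈ procsC (D X).2, r ∈ ps

end CC

namespace CC

/-! ### Auxiliary development for the amendment completeness theorem -/

theorem stepMany_append {D : DefSet} {C s tl C' s' tl' C'' s''}
    (h1 : StepMany D C s tl C' s') (h2 : StepMany D C' s' tl' C'' s'') :
    StepMany D C s (tl ++ tl') C'' s'' := by
  induction h1 with
  | refl => exact h2
  | step hst _ ih => exact .step hst (ih h2)

theorem eval_congr {e : Expr} {s u : State} {p : Pid} (h : ∀ y, u p y = s p y) :
    eval e u p = eval e s p := by cases e <;> simp [eval, h]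

theorem beval_congr {b : BExpr} {s u : State} {p : Pid} (h : ∀ y, u p y = s p y) :
    beval b u p = beval b s p := by cases b <;> simp [beval, h]

/-- A step only modifies the state of processes appearing in its label. -/
theorem step_state_off {D : DefSet} {C s t C' s'} (h : Step D C s t C' s') :
    ∀ r, r ∉ tlProcs t → ∀ y, s' r y = s r y := by
  induction h with
  | @com p e q x C s =>
      intro r hr y
      simp only [tlProcs, Finset.mem_insert, Finset.mem_singleton, not_or] at hr
      simp [updState, hr.2]
  | sel => intro r _ y; rfl
  | thenB => intro r _ y; rfl
  | elseB => intro r _ y; rfl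
  | call => intro r _ y; rfl
  | delayEta _ _ ih => exact ih
  | delayCond _ _ _ ih _ => exact ih

/-- Overwrite `u` with `s` on the processes of `t`. -/
def patch (t : TLabel) (s u : State) : State :=
  fun r y => if r ∈ tlProcs t then s r y else u r y

/-- A step only depends on the state of processes appearing in its label. -/
theorem step_mono {D : DefSet} {C s t C' s'} (h : Step D C s t C' s') :
    ∀ u, (∀ r ∈ tlProcs t, ∀ y, u r y = s r y) → Step D C u t C' (patch t s' u) := by
  induction h with
  | @com p e q x C s =>
      intro u hu
      have hp : ∀ y, u p y = s p y := hu p (by simp [tlProcs])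
      have hq : ∀ y, u q y = s q y := hu q (by simp [tlProcs])
      have he : eval e u p = eval e s p := eval_congr hp
      have hst : patch (.com p (eval e s p) q) (updState s q x (eval e s p)) u
          = updState u q x (eval e u p) := by
        funext r y
        simp only [patch, updState, tlProcs, Finset.mem_insert, Finset.mem_singleton, he]
        by_cases hrq : r = q
        · subst hrq
          by_cases hyx : y = x <;> simp [hyx, hq]
        · by_cases hrp : r = p <;> simp [hrp, hrq, hp]
      rw [hst, ← he]
      exact Step.com
  | @sel p q l C s =>
      intro u hu
      have : patch (.sel p q l) s u = u := by
        funext r y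
        simp only [patch]
        split
        · exact (hu r ‹_› y).symm
        · rfl
      rw [this]; exact Step.sel
  | @thenB p b C1 C2 s hb =>
      intro u hu
      have hp : ∀ y, u p y = s p y := hu p (by simp [tlProcs])
      have : patch (.tau p) s u = u := by
        funext r y
        simp only [patch, tlProcs, Finset.mem_singleton]
        split
        · subst ‹r = p›; exact (hp y).symm
        · rfl
      rw [this]
      exact Step.thenB (by rw [beval_congr hp]; exact hb)
  | @elseB p b C1 C2 s hb =>
      intro u hu
      have hp : ∀ y, u p y = s p y := hu p (by simp [tlProcs])
      have : patch (.tau p) s u = u := by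
        funext r y
        simp only [patch, tlProcs, Finset.mem_singleton]
        split
        · subst ‹r = p›; exact (hp y).symm
        · rfl
      rw [this]
      exact Step.elseB (by rw [beval_congr hp]; exact hb)
  | @call X p s hp =>
      intro u hu
      have hpy : ∀ y, u p y = s p y := hu p (by simp [tlProcs])
      have : patch (.tau p) s u = u := by
        funext r y
        simp only [patch, tlProcs, Finset.mem_singleton]
        split
        · subst ‹r = p›; exact (hpy y).symm
        · rfl
      rw [this]; exact Step.call hp
  | delayEta hdisj _ ih => exact fun u hu => Step.delayEta hdisj (ih u hu)
  | delayCond hp _ _ ih1 ih2 => exact fun u hu => Step.delayCond hp (ih1 u hu) (ih2 u hu)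

/-- In-order executions: only top-level steps, no out-of-order rules. -/
inductive InOrder (D : DefSet) : Chor → State → List TLabel → Chor → State → Prop
| refl {C s} : InOrder D C s [] C s
| com {p e q x C s tl C' s'} :
    InOrder D C (updState s q x (eval e s p)) tl C' s' →
    InOrder D (.seq (.com p e q x) C) s (.com p (eval e s p) q :: tl) C' s'
| sel {p q l C s tl C' s'} : InOrder D C s tl C' s' →
    InOrder D (.seq (.sel p q l) C) s (.sel p q l :: tl) C' s'
| thenB {p b C1 C2 s tl C' s'} : beval b s p = true → InOrder D C1 s tl C' s' →
    InOrder D (.cond p b C1 C2) s (.tau p :: tl) C' s'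
| elseB {p b C1 C2 s tl C' s'} : beval b s p = false → InOrder D C2 s tl C' s' →
    InOrder D (.cond p b C1 C2) s (.tau p :: tl) C' s'
| call {X p s tl C' s'} : p ∈ (D X).1 → InOrder D (D X).2 s tl C' s' →
    InOrder D (.call X) s (.tau p :: tl) C' s'

theorem perm_shift (a : TLabel) {t : TLabel} {L tl2 tlS : List TLabel}
    (h : tlS.Perm (t :: (L ++ tl2))) : (a :: tlS).Perm (t :: ((a :: L) ++ tl2)) :=
  (h.cons a).trans (List.Perm.swap t a _)

theorem perm_top (t : TLabel) (tlio : List TLabel) :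
    (t :: tlio).Perm (t :: (tlio ++ [])) := by simp

/-- Key reordering lemma: a (possibly out-of-order) step followed by an in-order run
can be completed and reordered into an in-order run. -/
theorem step_inorder {D : DefSet} (C : Chor) :
    ∀ {s t C1 s1}, Step D C s t C1 s1 →
    ∀ {tlio C'' s''}, InOrder D C1 s1 tlio C'' s'' →
    ∃ tl2 C3 s3 tlS, StepMany D C'' s'' tl2 C3 s3 ∧ InOrder D C s tlS C3 s3 ∧
      tlS.Perm (t :: (tlio ++ tl2)) := by
  induction C with
  | seq η C0 ih =>
      intro s t C1 s1 hstep tlio C'' s'' hio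
      cases hstep with
      | com => exact ⟨[], C'', s'', _ :: tlio, .refl, .com hio, perm_top _ _⟩
      | sel => exact ⟨[], C'', s'', _ :: tlio, .refl, .sel hio, perm_top _ _⟩
      | @delayEta _ _ _ _ C0' _ hdisj hsub =>
          cases η with
          | com p e q x =>
              have hp : p ∉ tlProcs t := fun hmem =>
                (Finset.disjoint_left.1 hdisj (by simp [procsEta])) hmem
              have hq : q ∉ tlProcs t := fun hmem =>
                (Finset.disjoint_left.1 hdisj (by simp [procsEta])) hmem
              have hoff : ∀ r, r ∉ tlProcs t → ∀ y, s1 r y = s r y := step_state_off hsub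
              have hev : eval e s1 p = eval e s p := eval_congr (fun y => hoff p hp y)
              -- the step `t` can also be fired after executing η
              have hu : ∀ r ∈ tlProcs t, ∀ y, updState s q x (eval e s p) r y = s r y := by
                intro r hr y
                simp only [updState]
                rw [if_neg]
                rintro ⟨rfl, -⟩; exact hq hr
              have hsub' := step_mono hsub _ hu
              have hpatch : patch t s1 (updState s q x (eval e s p))
                  = updState s1 q x (eval e s p) := by
                funext r y
                simp only [patch, updState]
                by_cases hr : r ∈ tlProcs t
                · rw [if_pos hr, if_neg]
                  rintro ⟨rfl, -⟩; exact hq hr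
                · rw [if_neg hr]
                  by_cases hc : r = q ∧ y = x
                  · rw [if_pos hc, if_pos hc]
                  · rw [if_neg hc, if_neg hc, hoff r hr]
              rw [hpatch] at hsub'
              cases hio with
              | refl =>
                  obtain ⟨tl2, C3, s3, tlS, h1, h2, h3⟩ := ih hsub' InOrder.refl
                  refine ⟨.com p (eval e s p) q :: tl2, C3, s3,
                    .com p (eval e s p) q :: tlS, .step ?_ h1, InOrder.com h2,
                    perm_shift _ h3⟩
                  rw [← hev]
                  exact Step.com
              | com hrest =>
                  rw [hev] at hrest ⊢
                  obtain ⟨tl2, C3, s3, tlS, h1, h2, h3⟩ := ih hsub' hrest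
                  exact ⟨tl2, C3, s3, .com p (eval e s p) q :: tlS, h1, InOrder.com h2,
                    perm_shift _ h3⟩
          | sel p q l =>
              cases hio with
              | refl =>
                  obtain ⟨tl2, C3, s3, tlS, h1, h2, h3⟩ := ih hsub InOrder.refl
                  exact ⟨.sel p q l :: tl2, C3, s3, .sel p q l :: tlS,
                    .step Step.sel h1, InOrder.sel h2, perm_shift _ h3⟩
              | sel hrest =>
                  obtain ⟨tl2, C3, s3, tlS, h1, h2, h3⟩ := ih hsub hrest
                  exact ⟨tl2, C3, s3, .sel p q l :: tlS, h1, InOrder.sel h2,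
                    perm_shift _ h3⟩
  | cond p b C1 C2 ih1 ih2 =>
      intro s t Cr s1 hstep tlio C'' s'' hio
      cases hstep with
      | thenB hb => exact ⟨[], C'', s'', .tau p :: tlio, .refl, .thenB hb hio, perm_top _ _⟩
      | elseB hb => exact ⟨[], C'', s'', .tau p :: tlio, .refl, .elseB hb hio, perm_top _ _⟩
      | @delayCond _ _ _ _ _ _ C1' C2' _ hp hsub1 hsub2 =>
          have hoff : ∀ r, r ∉ tlProcs t → ∀ y, s1 r y = s r y := step_state_off hsub1
          have hbe : beval b s1 p = beval b s p := beval_congr (fun y => hoff p hp y)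
          cases hio with
          | refl =>
              cases hb : beval b s p with
              | true =>
                  obtain ⟨tl2, C3, s3, tlS, h1, h2, h3⟩ := ih1 hsub1 InOrder.refl
                  exact ⟨.tau p :: tl2, C3, s3, .tau p :: tlS,
                    .step (Step.thenB (by rw [hbe]; exact hb)) h1, .thenB hb h2,
                    perm_shift _ h3⟩
              | false =>
                  obtain ⟨tl2, C3, s3, tlS, h1, h2, h3⟩ := ih2 hsub2 InOrder.refl
                  exact ⟨.tau p :: tl2, C3, s3, .tau p :: tlS,
                    .step (Step.elseB (by rw [hbe]; exact hb)) h1, .elseB hb h2,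
                    perm_shift _ h3⟩
          | thenB hb hrest =>
              obtain ⟨tl2, C3, s3, tlS, h1, h2, h3⟩ := ih1 hsub1 hrest
              exact ⟨tl2, C3, s3, .tau p :: tlS, h1,
                .thenB (by rw [← hbe]; exact hb) h2, perm_shift _ h3⟩
          | elseB hb hrest =>
              obtain ⟨tl2, C3, s3, tlS, h1, h2, h3⟩ := ih2 hsub2 hrest
              exact ⟨tl2, C3, s3, .tau p :: tlS, h1,
                .elseB (by rw [← hbe]; exact hb) h2, perm_shift _ h3⟩
  | call X =>
      intro s t C1 s1 hstep tlio C'' s'' hio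
      cases hstep with
      | call hp => exact ⟨[], C'', s'', .tau _ :: tlio, .refl, .call hp hio, perm_top _ _⟩
  | nil =>
      intro s t C1 s1 hstep
      cases hstep

/-- Completion lemma: any run can be completed and reordered into an in-order run. -/
theorem stepMany_inorder {D : DefSet} {C s tl C' s'} (h : StepMany D C s tl C' s') :
    ∃ tl' C'' s'' tlS, StepMany D C' s' tl' C'' s'' ∧ InOrder D C s tlS C'' s'' ∧
      tlS.Perm (tl ++ tl') := by
  induction h with
  | refl => exact ⟨[], _, _, [], .refl, .refl, List.Perm.refl _⟩
  | @step C s t Cm sm tl C' s' hst hmany ih =>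
      obtain ⟨tl', C'', s'', tlS, h1, h2, h3⟩ := ih
      obtain ⟨tl2, C3, s3, tlS2, g1, g2, g3⟩ := step_inorder _ hst h2
      refine ⟨tl' ++ tl2, C3, s3, tlS2, stepMany_append h1 g1, g2, ?_⟩
      refine g3.trans ?_
      have := (h3.append_right tl2).cons t
      simpa [List.append_assoc] using this

theorem selExp_refl (tl : List TLabel) : SelExp tl tl := .base (List.Perm.refl _)

theorem selExp_cons {tl tl' : List TLabel} (t : TLabel) (h : SelExp tl tl') :
    SelExp (t :: tl) (t :: tl') := by
  induction h with
  | base hp => exact .base (hp.cons t)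
  | extra h hp ih => exact .extra ih ((List.Perm.swap ..).trans (hp.cons t))

theorem selExp_perm_left {tl0 tl tl' : List TLabel} (hperm : tl0.Perm tl)
    (h : SelExp tl tl') : SelExp tl0 tl' := by
  induction h with
  | base hp => exact .base (hperm.trans hp)
  | extra h hp ih => exact .extra (ih hperm) hp

theorem selExp_sels_append {tl tl' : List TLabel} (h : SelExp tl tl')
    (p : Pid) (lab : Label) (l : List Pid) :
    SelExp tl ((l.map fun r => TLabel.sel p r lab) ++ tl') := by
  induction l with
  | nil => exact h
  | cons r l ih => exact .extra ih (List.Perm.refl _)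

theorem add_sels_steps (D : DefSet) (p : Pid) (lab : Label) (l : List Pid) (B : Chor)
    (s : State) :
    StepMany D (add_sels p lab l B) s (l.map fun r => TLabel.sel p r lab) B s := by
  induction l with
  | nil => exact .refl
  | cons r l ih => exact .step Step.sel ih

/-- The amended program simulates in-order runs up to selection expansion. -/
theorem inorder_amend {D : DefSet} (ps : List Pid) {C s tl C'' s''}
    (h : InOrder D C s tl C'' s'') :
    ∃ tlA, SelExp tl tlA ∧
      StepMany (amend_D D ps) (amend D ps C) s tlA (amend D ps C'') s'' := by
  induction h with
  | refl => exact ⟨[], selExp_refl _, .refl⟩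
  | com _ ih =>
      obtain ⟨tlA, hs, hst⟩ := ih
      exact ⟨_ :: tlA, selExp_cons _ hs, .step Step.com hst⟩
  | sel _ ih =>
      obtain ⟨tlA, hs, hst⟩ := ih
      exact ⟨_ :: tlA, selExp_cons _ hs, .step Step.sel hst⟩
  | @thenB p b C1 C2 s tl C' s' hb _ ih =>
      obtain ⟨tlA, hs, hst⟩ := ih
      refine ⟨.tau p :: (((up_list D p b ps (amend D ps C1) (amend D ps C2)).map
        fun r => TLabel.sel p r .left) ++ tlA),
        selExp_cons _ (selExp_sels_append hs p .left _), ?_⟩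
      exact .step (Step.thenB hb) (stepMany_append (add_sels_steps ..) hst)
  | @elseB p b C1 C2 s tl C' s' hb _ ih =>
      obtain ⟨tlA, hs, hst⟩ := ih
      refine ⟨.tau p :: (((up_list D p b ps (amend D ps C1) (amend D ps C2)).map
        fun r => TLabel.sel p r .right) ++ tlA),
        selExp_cons _ (selExp_sels_append hs p .right _), ?_⟩
      exact .step (Step.elseB hb) (stepMany_append (add_sels_steps ..) hst)
  | @call X p s tl C' s' hp _ ih =>
      obtain ⟨tlA, hs, hst⟩ := ih
      exact ⟨_ :: tlA, selExp_cons _ hs, .step (Step.call hp) hst⟩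

end CC

open CC in
theorem amend_complete_many (D : CC.DefSet) (C : CC.Chor) (ps : List CC.Pid)
    (s : CC.State) (tl : List CC.TLabel) (C' : CC.Chor) (s' : CC.State)
    (hWF : Program_WF D C) (h : StepMany D C s tl C' s') :
    ∃ (tl' tl'' : List CC.TLabel) (C'' : CC.Chor) (s'' : CC.State),
      SelExp (tl ++ tl') tl'' ∧
      StepMany D C' s' tl' C'' s'' ∧
      StepMany (amend_D D ps) (amend D ps C) s tl'' (amend D ps C'') s'' := by
  obtain ⟨tl', C'', s'', tlS, h1, h2, h3⟩ := stepMany_inorder h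
  obtain ⟨tlA, hsel, hrun⟩ := inorder_amend ps h2
  exact ⟨tl', tlA, C'', s'', selExp_perm_left h3.symm hsel, h1, hrun⟩
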